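/- For every musical interval σ ∈ 𝔖 there exists ℓ ∈ ℕ such that K^ℓ(σ) = 𝔬, i.e., every musical interval reaches the octave after finitely many iterations of the Kepler map. -/

import Mathlib

/-- The positive rational numbers ℚ₊. -/
abbrev Qpos := {q : ℚ // 0 < q}

/-- Octave equivalence on ℚ₊: `q₁ ∼ q₂` iff `q₁ = 2^n * q₂` for some `n ∈ ℤ`. -/
def octaveRel (q₁ q₂ : Qpos) : Prop := ∃ n : ℤ, (q₁ : ℚ) = 2 ^ n * (q₂ : ℚ)

/-- The group of musical intervals `𝔖 = ℚ₊/∼`. -/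
def MusInt := Quot octaveRel

/-- The musical interval `[q]` represented by a positive rational `q`. -/
def cls (q : ℚ) (h : 0 < q) : MusInt := Quot.mk octaveRel ⟨q, h⟩

/-- The octave `𝔬 = [1/2]`. -/
def octave : MusInt := cls (1/2) (by norm_num)

/-- `repSpec σ (m, n)` says that `(m, n)` is a reduced representative of `σ`,
i.e. `σ = [m/n]`, `1/2 ≤ m/n < 1` and `gcd(n, m) = 1`. -/
def repSpec (σ : MusInt) (p : ℕ × ℕ) : Prop :=
  ∃ h : (0 : ℚ) < (p.1 : ℚ) / (p.2 : ℚ),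
    σ = cls ((p.1 : ℚ) / (p.2 : ℚ)) h ∧
    (1 : ℚ) / 2 ≤ (p.1 : ℚ) / (p.2 : ℚ) ∧ (p.1 : ℚ) / (p.2 : ℚ) < 1 ∧
    Nat.gcd p.2 p.1 = 1

open Classical in
/-- The canonical reduced representative `(m_σ, n_σ)` of a musical interval. -/
noncomputable def rep (σ : MusInt) : ℕ × ℕ :=
  if h : ∃ p, repSpec σ p then h.choose else (1, 2)

/-- The numerator `m_σ`, so that `σ = [m_σ/n_σ]`. -/
noncomputable def mVal (σ : MusInt) : ℕ := (rep σ).1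

/-- The map `𝒩`, sending `σ` to the denominator `n_σ`, so that `σ = [m_σ/n_σ]`. -/
noncomputable def nVal (σ : MusInt) : ℕ := (rep σ).2

/-- The Kepler map `K(σ) = [(n_σ - m_σ)/m_σ]`. -/
noncomputable def kepler (σ : MusInt) : MusInt :=
  if h : (0 : ℚ) < ((nVal σ : ℚ) - (mVal σ : ℚ)) / (mVal σ : ℚ) then
    cls (((nVal σ : ℚ) - (mVal σ : ℚ)) / (mVal σ : ℚ)) h
  else octave

/-- The height `𝔥(σ) = min {ℓ ∈ ℕ₀ : K^ℓ(σ) = 𝔬}`. -/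
noncomputable def height (σ : MusInt) : ℕ := sInf {ℓ : ℕ | kepler^[ℓ] σ = octave}

/-- `n` is an Euclidean Gauss–Wantzel number: `n = 2^k * 3^l * 5^m` with
`l, m ∈ {0, 1}` and `n > 1`. -/
def IsEuclidean (n : ℕ) : Prop :=
  1 < n ∧ ∃ k l m : ℕ, (l = 0 ∨ l = 1) ∧ (m = 0 ∨ m = 1) ∧ n = 2 ^ k * 3 ^ l * 5 ^ m

/-- `p` is a Fermat prime: a prime of the form `2^(2^n) + 1`. -/
def IsFermatPrime (p : ℕ) : Prop := p.Prime ∧ ∃ n : ℕ, p = 2 ^ (2 ^ n) + 1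

/-- `n` is a Gauss–Wantzel number: `n > 1` is a power of `2` times a product of
distinct Fermat primes. -/
def IsGaussWantzel (n : ℕ) : Prop :=
  1 < n ∧ ∃ (k : ℕ) (s : Finset ℕ), (∀ p ∈ s, IsFermatPrime p) ∧ n = 2 ^ k * ∏ p ∈ s, p

/-- `σ` is Euclidean consonant: all members of its second Kepler sequence are
Euclidean Gauss–Wantzel numbers. -/
def EuclideanConsonant (σ : MusInt) : Prop :=
  ∀ j ≤ height σ, IsEuclidean (nVal (kepler^[j] σ))

/-- `σ` is Gaussian consonant: all members of its second Kepler sequence are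
Gauss–Wantzel numbers. -/
def GaussianConsonant (σ : MusInt) : Prop :=
  ∀ j ≤ height σ, IsGaussWantzel (nVal (kepler^[j] σ))

lemma octaveRel_equivalence : Equivalence octaveRel := by
  constructor
  · intro q; exact ⟨0, by simp⟩
  · rintro q₁ q₂ ⟨n, h⟩
    refine ⟨-n, ?_⟩
    rw [h, ← mul_assoc, ← zpow_add₀ (by norm_num : (2:ℚ) ≠ 0)]
    simp
  · rintro q₁ q₂ q₃ ⟨n, h⟩ ⟨k, h'⟩
    exact ⟨n + k, by rw [h, h', ← mul_assoc, ← zpow_add₀ (by norm_num : (2:ℚ) ≠ 0)]⟩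

lemma cls_eq_iff {a b : ℚ} (ha : 0 < a) (hb : 0 < b) :
    cls a ha = cls b hb ↔ ∃ t : ℤ, a = 2 ^ t * b := by
  rw [cls, cls]
  show (Quot.mk octaveRel _ : Quot octaveRel) = Quot.mk octaveRel _ ↔ _
  rw [Quot.eq, octaveRel_equivalence.eqvGen_iff]
  exact Iff.rfl

lemma cls_congr {a b : ℚ} {ha : 0 < a} {hb : 0 < b} (h : a = b) :
    cls a ha = cls b hb :=
  congrArg (Quot.mk octaveRel) (Subtype.ext h)

lemma repSpec_exists (σ : MusInt) : ∃ p, repSpec σ p := by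
  induction σ using Quot.ind with
  | _ q =>
    obtain ⟨q, hq⟩ := q
    obtain ⟨j, hj1, hj2⟩ := exists_mem_Ico_zpow hq (by norm_num : (1:ℚ) < 2)
    set r : ℚ := 2 ^ (-(j+1)) * q with hrdef
    have hp2 : (0:ℚ) < 2 ^ (-(j+1)) := by positivity
    have hr0 : 0 < r := by positivity
    have e1 : (2:ℚ) ^ (-(j+1)) * 2 ^ j = 1/2 := by
      rw [← zpow_add₀ (by norm_num : (2:ℚ) ≠ 0)]
      have : -(j+1) + j = -1 := by ring
      rw [this]
      norm_num
    have e2 : (2:ℚ) ^ (-(j+1)) * 2 ^ (j+1) = 1 := by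
      rw [← zpow_add₀ (by norm_num : (2:ℚ) ≠ 0)]
      have h : -(j+1) + (j+1) = 0 := by ring
      rw [h, zpow_zero]
    have hhalf : 1/2 ≤ r := by
      have := mul_le_mul_of_nonneg_left hj1 hp2.le
      rw [e1] at this; exact this
    have hlt : r < 1 := by
      have := mul_lt_mul_of_pos_left hj2 hp2
      rw [e2] at this; exact this
    have hnum : 0 < r.num := Rat.num_pos.mpr hr0
    have hcast : ((r.num.toNat : ℚ)) / ((r.den : ℚ)) = r := by
      have : ((r.num.toNat : ℤ) : ℚ) = (r.num : ℚ) := by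
        exact_mod_cast congrArg (Int.cast : ℤ → ℚ) (Int.toNat_of_nonneg hnum.le)
      push_cast at this ⊢
      rw [this, Rat.num_div_den]
    have hposf : (0:ℚ) < (r.num.toNat : ℚ) / (r.den : ℚ) := by rw [hcast]; exact hr0
    refine ⟨(r.num.toNat, r.den), hposf, ?_, ?_, ?_, ?_⟩
    · have h1 : cls ((r.num.toNat : ℚ) / (r.den : ℚ)) hposf = cls r hr0 := cls_congr hcast
      rw [h1]
      show Quot.mk octaveRel _ = Quot.mk octaveRel _
      apply Quot.sound
      refine ⟨j+1, ?_⟩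
      show q = 2 ^ (j+1) * r
      rw [hrdef, ← mul_assoc, ← zpow_add₀ (by norm_num : (2:ℚ) ≠ 0)]
      have h : (j+1) + -(j+1) = 0 := by ring
      rw [h, zpow_zero, one_mul]
    · rw [hcast]; exact hhalf
    · rw [hcast]; exact hlt
    · have h1 : r.num.toNat = r.num.natAbs := by omega
      rw [h1]
      exact (r.reduced).symm

lemma repSpec_pos {σ : MusInt} {p : ℕ × ℕ} (h : repSpec σ p) : 0 < p.1 ∧ 0 < p.2 := by
  obtain ⟨hpos, -⟩ := h
  have h1 : p.1 ≠ 0 := by rintro e; rw [e] at hpos; simp at hpos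
  have h2 : p.2 ≠ 0 := by rintro e; rw [e] at hpos; simp at hpos
  exact ⟨Nat.pos_of_ne_zero h1, Nat.pos_of_ne_zero h2⟩

lemma repSpec_unique {σ : MusInt} {p q : ℕ × ℕ} (hp : repSpec σ p) (hq : repSpec σ q) :
    p = q := by
  obtain ⟨hm1, hn1⟩ := repSpec_pos hp
  obtain ⟨hm2, hn2⟩ := repSpec_pos hq
  obtain ⟨hpos1, hcls1, hge1, hlt1, hgcd1⟩ := hp
  obtain ⟨hpos2, hcls2, hge2, hlt2, hgcd2⟩ := hq
  have heq : cls _ hpos1 = cls _ hpos2 := by rw [← hcls1, ← hcls2]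
  obtain ⟨t, ht⟩ := (cls_eq_iff hpos1 hpos2).mp heq
  have ht0 : t = 0 := by
    by_contra h0
    rcases lt_or_gt_of_ne h0 with h | h
    · have h1 : t ≤ -1 := by omega
      have h2 : (2:ℚ) ^ t ≤ 2 ^ (-1:ℤ) := zpow_le_zpow_right₀ (by norm_num) h1
      have h3 : (2:ℚ) ^ (-1:ℤ) = 1/2 := by norm_num
      have h4 : (0:ℚ) < 2 ^ t := by positivity
      have h5 : (2:ℚ) ^ t * ((q.1:ℚ) / (q.2:ℚ)) < 2 ^ t * 1 :=
        mul_lt_mul_of_pos_left hlt2 h4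
      rw [h3] at h2
      nlinarith [hge1, ht]
    · have h1 : (1:ℤ) ≤ t := by omega
      have h2 : (2:ℚ) ^ (1:ℤ) ≤ 2 ^ t := zpow_le_zpow_right₀ (by norm_num) h1
      have h3 : (2:ℚ) ^ (1:ℤ) = 2 := by norm_num
      have h5 : (2:ℚ) ^ (1:ℤ) * (1/2) ≤ 2 ^ t * ((q.1:ℚ) / (q.2:ℚ)) :=
        mul_le_mul h2 hge2 (by norm_num) (by positivity)
      rw [h3] at h5
      nlinarith [hlt1, ht]
  rw [ht0, zpow_zero, one_mul] at ht
  have hcross : (p.1 : ℚ) * q.2 = q.1 * p.2 := by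
    have hQ1 : ((p.2:ℚ)) ≠ 0 := by
      have : (0:ℚ) < (p.2:ℚ) := by exact_mod_cast hn1
      exact this.ne'
    have hQ2 : ((q.2:ℚ)) ≠ 0 := by
      have : (0:ℚ) < (q.2:ℚ) := by exact_mod_cast hn2
      exact this.ne'
    rw [div_eq_div_iff hQ1 hQ2] at ht
    exact ht
  have hcrossN : p.1 * q.2 = q.1 * p.2 := by exact_mod_cast hcross
  have hc1 : Nat.Coprime p.1 p.2 := (Nat.coprime_comm.mp hgcd1)
  have hc2 : Nat.Coprime q.1 q.2 := (Nat.coprime_comm.mp hgcd2)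
  have hd1 : p.1 ∣ q.1 := by
    have : p.1 ∣ q.1 * p.2 := ⟨q.2, by omega⟩
    exact (Nat.Coprime.dvd_of_dvd_mul_right hc1 this)
  have hd2 : q.1 ∣ p.1 := by
    have : q.1 ∣ p.1 * q.2 := ⟨p.2, by omega⟩
    exact (Nat.Coprime.dvd_of_dvd_mul_right hc2 this)
  have hm : p.1 = q.1 := Nat.dvd_antisymm hd1 hd2
  have hn : p.2 = q.2 := by
    rw [hm] at hcrossN
    exact (Nat.eq_of_mul_eq_mul_left hm2 (by omega)).symm
  exact Prod.ext hm hn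

lemma repSpec_rep (σ : MusInt) : repSpec σ (rep σ) := by
  have h := repSpec_exists σ
  rw [rep, dif_pos h]
  exact h.choose_spec

lemma rep_eq {σ : MusInt} {p : ℕ × ℕ} (h : repSpec σ p) : rep σ = p :=
  repSpec_unique (repSpec_rep σ) h

lemma repSpec_octave : repSpec octave ((1:ℕ), (2:ℕ)) := by
  refine ⟨by norm_num, ?_, by norm_num, by norm_num, by norm_num⟩
  show octave = cls _ _
  rw [octave]
  exact cls_congr (by norm_num)

lemma rep_octave : rep octave = (1, 2) := rep_eq repSpec_octave

lemma kepler_octave : kepler octave = octave := by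
  have hm : mVal octave = 1 := by rw [mVal, rep_octave]
  have hn : nVal octave = 2 := by rw [nVal, rep_octave]
  rw [kepler, hm, hn]
  rw [dif_pos (by norm_num : (0:ℚ) < (((2:ℕ):ℚ) - ((1:ℕ):ℚ)) / ((1:ℕ):ℚ))]
  rw [octave]
  exact (cls_eq_iff _ _).mpr ⟨1, by norm_num⟩

lemma nVal_kepler_lt {σ : MusInt} (hσ : σ ≠ octave) : nVal (kepler σ) < nVal σ := by
  obtain ⟨hpos, hcls, hge, hlt, hgcd⟩ := repSpec_rep σ
  obtain ⟨hm0, hn0⟩ := repSpec_pos (repSpec_rep σ)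
  set m := (rep σ).1 with hmdef
  set n := (rep σ).2 with hndef
  have hnQ : (0:ℚ) < (n:ℚ) := by exact_mod_cast hn0
  have hmQ : (0:ℚ) < (m:ℚ) := by exact_mod_cast hm0
  have hmn : m < n := by
    have := (div_lt_one hnQ).mp hlt
    exact_mod_cast this
  have hle2 : n ≤ 2 * m := by
    rw [div_le_div_iff₀ (by norm_num) hnQ] at hge
    have : (n:ℚ) ≤ (m:ℚ) * 2 := by linarith
    have : (n:ℚ) ≤ ((2 * m : ℕ) : ℚ) := by push_cast; linarith
    exact_mod_cast this
  have hlt2 : n < 2 * m := by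
    rcases lt_or_eq_of_le hle2 with h | h
    · exact h
    · exfalso
      have hg : Nat.gcd n m = m := by
        rw [h]
        calc Nat.gcd (2 * m) m = Nat.gcd (2 * m) (1 * m) := by rw [one_mul]
        _ = Nat.gcd 2 1 * m := Nat.gcd_mul_right 2 m 1
        _ = m := by norm_num
      have hm1 : m = 1 := by omega
      have hn2 : n = 2 := by omega
      apply hσ
      rw [hcls, octave]
      apply cls_congr
      show (m:ℚ) / (n:ℚ) = 1/2
      rw [hm1, hn2]; norm_num
  have hposK : (0:ℚ) < ((n:ℚ) - (m:ℚ)) / (m:ℚ) := by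
    apply div_pos _ hmQ
    have : (m:ℚ) < (n:ℚ) := by exact_mod_cast hmn
    linarith
  have hK : kepler σ = cls (((n:ℚ) - (m:ℚ)) / (m:ℚ)) hposK := by
    rw [kepler]
    rw [dif_pos (show (0:ℚ) < ((nVal σ : ℚ) - (mVal σ : ℚ)) / (mVal σ : ℚ) from hposK)]
    exact cls_congr rfl
  obtain ⟨hpos', hcls', hge', hlt', hgcd'⟩ := repSpec_rep (kepler σ)
  obtain ⟨hm0', hn0'⟩ := repSpec_pos (repSpec_rep (kepler σ))
  set m' := (rep (kepler σ)).1 with hmdef'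
  set n' := (rep (kepler σ)).2 with hndef'
  have heq : cls _ hpos' = cls _ hposK := by rw [← hcls', ← hK]
  obtain ⟨t, ht⟩ := (cls_eq_iff hpos' hposK).mp heq
  have hfrac_lt : ((n:ℚ) - (m:ℚ)) / (m:ℚ) < 1 := by
    rw [div_lt_one hmQ]
    have : (n:ℚ) < 2 * (m:ℚ) := by exact_mod_cast hlt2
    linarith
  have ht0 : 0 ≤ t := by
    by_contra h0
    push_neg at h0
    have h1 : t ≤ -1 := by omega
    have h2 : (2:ℚ) ^ t ≤ 2 ^ (-1:ℤ) := zpow_le_zpow_right₀ (by norm_num) h1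
    have h3 : (2:ℚ) ^ (-1:ℤ) = 1/2 := by norm_num
    have h4 : (0:ℚ) < 2 ^ t := by positivity
    have h5 : (2:ℚ) ^ t * (((n:ℚ) - m) / m) < 2 ^ t * 1 :=
      mul_lt_mul_of_pos_left hfrac_lt h4
    rw [h3] at h2
    nlinarith [hge', ht]
  lift t to ℕ using ht0 with s
  rw [zpow_natCast] at ht
  have hmain : (m' : ℚ) * m = 2 ^ s * ((n:ℚ) - m) * n' := by
    have hn'Q : (0:ℚ) < (n':ℚ) := by exact_mod_cast hn0'
    rw [mul_div_assoc'] at ht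
    rw [div_eq_div_iff hn'Q.ne' hmQ.ne'] at ht
    linarith [ht]
  have hsub : ((n:ℚ) - (m:ℚ)) = ((n - m : ℕ) : ℚ) := by
    push_cast [Nat.cast_sub hmn.le]; ring
  rw [hsub] at hmain
  have hmainN : m' * m = 2 ^ s * (n - m) * n' := by exact_mod_cast hmain
  have hdvd : n' ∣ m' * m := by rw [hmainN]; exact dvd_mul_left _ _
  have hcop : Nat.Coprime n' m' := hgcd'
  have hdm : n' ∣ m := hcop.dvd_of_dvd_mul_left hdvd
  have : n' ≤ m := Nat.le_of_dvd hm0 hdm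
  show n' < n
  omega

/-- every musical interval reaches the octave after finitely many
iterations of the Kepler map. -/
theorem kepler_iterate_eq_octave (σ : MusInt) :
    ∃ ℓ : ℕ, 0 < ℓ ∧ kepler^[ℓ] σ = octave := by
  suffices h : ∀ N τ, nVal τ ≤ N → ∃ ℓ : ℕ, 0 < ℓ ∧ kepler^[ℓ] τ = octave from
    h (nVal σ) σ le_rfl
  intro N
  induction N with
  | zero =>
    intro τ hτ
    have h2 := (repSpec_pos (repSpec_rep τ)).2
    have h3 : nVal τ = (rep τ).2 := rfl
    omega
  | succ N ih =>
    intro τ h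
    by_cases hτ : τ = octave
    · exact ⟨1, one_pos, by rw [Function.iterate_one, hτ, kepler_octave]⟩
    · obtain ⟨ℓ, hℓ, he⟩ := ih (kepler τ) (by have := nVal_kepler_lt hτ; omega)
      exact ⟨ℓ + 1, Nat.succ_pos _, by rw [Function.iterate_succ_apply]; exact he⟩
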